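/- With notation as in the pointwise consistency estimate, for the particle field $\omega = \sum_i \Gamma_i \delta_{x_i}$ and discrete Laplacian $\Delta_h \omega = \sum_i \sum_j f_{ij}\Gamma_i \delta_{x_j}$, one has for every $\varphi \in C^{n+2}$ with bounded derivatives: $|\langle \Delta\omega - \Delta_h\omega, \varphi\rangle| \leq 4 C_\alpha \frac{(Rh)^{n+2}}{(rh)^2} \left(\sum_i |\Gamma_i|\right) \max_{|\beta|=n+2}\|D^\beta\varphi\|_\infty$, where $\langle\Delta\omega,\varphi\rangle := \sum_i \Gamma_i \Delta\varphi(x_i)$ and $C_\alpha = \sum_{|\beta|=n+2} 1/\beta!$. -/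

import Mathlib

/-- Mixed partial derivative `D^(a,b) φ` of a function on `ℝ²`. -/
noncomputable def pd (a b : ℕ) (φ : ℝ × ℝ → ℝ) : ℝ × ℝ → ℝ :=
  fun p => iteratedDeriv a (fun s => iteratedDeriv b (fun t => φ (s, t)) p.2) p.1

noncomputable def Dx (ψ : ℝ × ℝ → ℝ) : ℝ × ℝ → ℝ := fun p => fderiv ℝ ψ p (1, 0)
noncomputable def Dy (ψ : ℝ × ℝ → ℝ) : ℝ × ℝ → ℝ := fun p => fderiv ℝ ψ p (0, 1)

lemma contDiff_Dx {m : ℕ} {ψ : ℝ × ℝ → ℝ} (h : ContDiff ℝ (↑(m+1)) ψ) :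
    ContDiff ℝ (↑m) (Dx ψ) := by
  have : ContDiff ℝ (↑m) (fderiv ℝ ψ) := h.fderiv_right (by exact_mod_cast le_refl (m+1))
  exact this.clm_apply contDiff_const

lemma contDiff_Dy {m : ℕ} {ψ : ℝ × ℝ → ℝ} (h : ContDiff ℝ (↑(m+1)) ψ) :
    ContDiff ℝ (↑m) (Dy ψ) := by
  have : ContDiff ℝ (↑m) (fderiv ℝ ψ) := h.fderiv_right (by exact_mod_cast le_refl (m+1))
  exact this.clm_apply contDiff_const

lemma contDiff_DxIter {m : ℕ} (a : ℕ) {ψ : ℝ × ℝ → ℝ} (h : ContDiff ℝ (↑(m+a)) ψ) :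
    ContDiff ℝ (↑m) (Dx^[a] ψ) := by
  induction a generalizing ψ with
  | zero => exact h
  | succ a ih =>
      rw [Function.iterate_succ_apply]
      exact ih (contDiff_Dx (by exact_mod_cast h))

lemma contDiff_DyIter {m : ℕ} (b : ℕ) {ψ : ℝ × ℝ → ℝ} (h : ContDiff ℝ (↑(m+b)) ψ) :
    ContDiff ℝ (↑m) (Dy^[b] ψ) := by
  induction b generalizing ψ with
  | zero => exact h
  | succ b ih =>
      rw [Function.iterate_succ_apply]
      exact ih (contDiff_Dy (by exact_mod_cast h))

lemma line_hasDerivAt {ψ : ℝ × ℝ → ℝ} (p v : ℝ × ℝ) {t : ℝ}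
    (hψ : DifferentiableAt ℝ ψ (p + t • v)) :
    HasDerivAt (fun s => ψ (p + s • v))
      (v.1 * Dx ψ (p + t • v) + v.2 * Dy ψ (p + t • v)) t := by
  have hline : HasDerivAt (fun s : ℝ => p + s • v) v t := by
    simpa using ((hasDerivAt_id t).smul_const v).const_add p
  have := (hψ.hasFDerivAt).comp_hasDerivAt t hline
  have hv : v = v.1 • ((1:ℝ), (0:ℝ)) + v.2 • ((0:ℝ), (1:ℝ)) := by
    simp [Prod.ext_iff]
  set L := fderiv ℝ ψ (p + t • v) with hL
  have hLv : L v = v.1 * L ((1:ℝ),(0:ℝ)) + v.2 * L ((0:ℝ),(1:ℝ)) := by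
    conv_lhs => rw [hv]
    rw [map_add, map_smul, map_smul, smul_eq_mul, smul_eq_mul]
  rw [hLv] at this
  exact this

lemma schwarz {ψ : ℝ × ℝ → ℝ} (h : ContDiff ℝ 2 ψ) : Dx (Dy ψ) = Dy (Dx ψ) := by
  funext p
  have hdiff : Differentiable ℝ ψ := h.differentiable (by norm_num)
  have hfd : ContDiff ℝ 1 (fderiv ℝ ψ) := h.fderiv_right (by norm_num)
  have hx : ∀ q : ℝ × ℝ, fderiv ℝ (Dy ψ) q = (fderiv ℝ (fderiv ℝ ψ) q).flip ((0:ℝ),(1:ℝ)) := by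
    intro q
    have := fderiv_clm_apply (c := fderiv ℝ ψ) (u := fun _ => ((0:ℝ),(1:ℝ)))
      (hfd.differentiable one_ne_zero q) (differentiableAt_const _)
    rw [show Dy ψ = fun y => fderiv ℝ ψ y ((0:ℝ),(1:ℝ)) from rfl]
    simpa using this
  have hy : ∀ q : ℝ × ℝ, fderiv ℝ (Dx ψ) q = (fderiv ℝ (fderiv ℝ ψ) q).flip ((1:ℝ),(0:ℝ)) := by
    intro q
    have := fderiv_clm_apply (c := fderiv ℝ ψ) (u := fun _ => ((1:ℝ),(0:ℝ)))
      (hfd.differentiable one_ne_zero q) (differentiableAt_const _)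
    rw [show Dx ψ = fun y => fderiv ℝ ψ y ((1:ℝ),(0:ℝ)) from rfl]
    simpa using this
  have hsymm : fderiv ℝ (fderiv ℝ ψ) p ((1:ℝ),(0:ℝ)) ((0:ℝ),(1:ℝ)) =
      fderiv ℝ (fderiv ℝ ψ) p ((0:ℝ),(1:ℝ)) ((1:ℝ),(0:ℝ)) :=
    (h.contDiffAt.isSymmSndFDerivAt (by norm_num)) _ _
  simp only [Dx, Dy, hx, hy]
  simpa using hsymm

lemma comm_iter (b : ℕ) {ψ : ℝ × ℝ → ℝ} (h : ContDiff ℝ (↑(b+1)) ψ) :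
    Dy^[b] (Dx ψ) = Dx (Dy^[b] ψ) := by
  induction b generalizing ψ with
  | zero => rfl
  | succ b ih =>
      have h2 : ContDiff ℝ 2 ψ := h.of_le (by exact_mod_cast Nat.le_add_left 2 b)
      have hDy : ContDiff ℝ (↑(b+1)) (Dy ψ) := contDiff_Dy (by exact_mod_cast h)
      calc Dy^[b+1] (Dx ψ) = Dy^[b] (Dy (Dx ψ)) := Function.iterate_succ_apply _ _ _
        _ = Dy^[b] (Dx (Dy ψ)) := by rw [schwarz h2]
        _ = Dx (Dy^[b] (Dy ψ)) := ih hDy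
        _ = Dx (Dy^[b+1] ψ) := by rw [Function.iterate_succ_apply]

lemma Dy_lin {c d : ℝ} {g₁ g₂ : ℝ × ℝ → ℝ} (h₁ : Differentiable ℝ g₁)
    (h₂ : Differentiable ℝ g₂) :
    Dy (fun p => c * g₁ p + d * g₂ p) = fun p => c * Dy g₁ p + d * Dy g₂ p := by
  funext p
  have e : fderiv ℝ (fun p => c * g₁ p + d * g₂ p) p
      = c • fderiv ℝ g₁ p + d • fderiv ℝ g₂ p := by
    rw [fderiv_fun_add ((h₁ p).const_mul c) ((h₂ p).const_mul d),
      fderiv_const_mul (h₁ p), fderiv_const_mul (h₂ p)]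
  simp [Dy, e]

lemma Dx_lin {c d : ℝ} {g₁ g₂ : ℝ × ℝ → ℝ} (h₁ : Differentiable ℝ g₁)
    (h₂ : Differentiable ℝ g₂) :
    Dx (fun p => c * g₁ p + d * g₂ p) = fun p => c * Dx g₁ p + d * Dx g₂ p := by
  funext p
  have e : fderiv ℝ (fun p => c * g₁ p + d * g₂ p) p
      = c • fderiv ℝ g₁ p + d • fderiv ℝ g₂ p := by
    rw [fderiv_fun_add ((h₁ p).const_mul c) ((h₂ p).const_mul d),
      fderiv_const_mul (h₁ p), fderiv_const_mul (h₂ p)]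
  simp [Dx, e]

lemma DyIter_lin (b : ℕ) {c d : ℝ} {g₁ g₂ : ℝ × ℝ → ℝ} (h₁ : ContDiff ℝ (↑b) g₁)
    (h₂ : ContDiff ℝ (↑b) g₂) :
    Dy^[b] (fun p => c * g₁ p + d * g₂ p) = fun p => c * Dy^[b] g₁ p + d * Dy^[b] g₂ p := by
  induction b generalizing g₁ g₂ with
  | zero => rfl
  | succ b ih =>
      rw [Function.iterate_succ_apply,
        Dy_lin (h₁.differentiable (by simp))
          (h₂.differentiable (by simp)),
        ih (contDiff_Dy (by exact_mod_cast h₁)) (contDiff_Dy (by exact_mod_cast h₂))]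
      simp [Function.iterate_succ_apply]

lemma DxIter_lin (a : ℕ) {c d : ℝ} {g₁ g₂ : ℝ × ℝ → ℝ} (h₁ : ContDiff ℝ (↑a) g₁)
    (h₂ : ContDiff ℝ (↑a) g₂) :
    Dx^[a] (fun p => c * g₁ p + d * g₂ p) = fun p => c * Dx^[a] g₁ p + d * Dx^[a] g₂ p := by
  induction a generalizing g₁ g₂ with
  | zero => rfl
  | succ a ih =>
      rw [Function.iterate_succ_apply,
        Dx_lin (h₁.differentiable (by simp))
          (h₂.differentiable (by simp)),
        ih (contDiff_Dx (by exact_mod_cast h₁)) (contDiff_Dx (by exact_mod_cast h₂))]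
      simp [Function.iterate_succ_apply]

lemma combo_iter (a b : ℕ) {ψ : ℝ × ℝ → ℝ} (h : ContDiff ℝ (↑(a+b+1)) ψ) (v : ℝ × ℝ) :
    Dx^[a] (Dy^[b] (fun q => v.1 * Dx ψ q + v.2 * Dy ψ q)) =
      fun q => v.1 * Dx^[a+1] (Dy^[b] ψ) q + v.2 * Dx^[a] (Dy^[b+1] ψ) q := by
  have hcast : ∀ k l : ℕ, k ≤ l → ((k : WithTop ℕ∞) ≤ (l : WithTop ℕ∞)) := by
    intro k l hkl; exact_mod_cast hkl
  have hDx : ContDiff ℝ (↑(a+b)) (Dx ψ) := contDiff_Dx (by exact_mod_cast h)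
  have hDy : ContDiff ℝ (↑(a+b)) (Dy ψ) := contDiff_Dy (by exact_mod_cast h)
  have h1 : Dy^[b] (fun q => v.1 * Dx ψ q + v.2 * Dy ψ q)
      = fun q => v.1 * Dy^[b] (Dx ψ) q + v.2 * Dy^[b] (Dy ψ) q :=
    DyIter_lin b (hDx.of_le (hcast _ _ (Nat.le_add_left b a)))
      (hDy.of_le (hcast _ _ (Nat.le_add_left b a)))
  have h2 : Dy^[b] (Dx ψ) = Dx (Dy^[b] ψ) :=
    comm_iter b (h.of_le (hcast _ _ (by omega)))
  have h3 : Dy^[b] (Dy ψ) = Dy^[b+1] ψ := (Function.iterate_succ_apply Dy b ψ).symm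
  have hA : ContDiff ℝ (↑a) (Dx (Dy^[b] ψ)) := by
    apply contDiff_Dx
    exact contDiff_DyIter b (h.of_le (hcast _ _ (by omega)))
  have hB : ContDiff ℝ (↑a) (Dy^[b+1] ψ) := by
    apply contDiff_DyIter (b+1)
    exact h.of_le (hcast _ _ (by omega))
  rw [h1, h2, h3, DxIter_lin a hA hB]
  funext q
  rw [Function.iterate_succ_apply Dx a (Dy^[b] ψ)]

lemma binom_step (k : ℕ) (v1 v2 : ℝ) (P : ℕ → ℕ → ℝ) :
    ∑ a ∈ Finset.range (k+2), (((k+1).choose a : ℕ) : ℝ) * v1^a * v2^(k+1-a) * P a (k+1-a)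
    = ∑ a ∈ Finset.range (k+1), ((k.choose a : ℕ) : ℝ) * v1^a * v2^(k-a) *
        (v1 * P (a+1) (k-a) + v2 * P a (k-a+1)) := by
  rw [Finset.sum_range_succ']
  have hg : ∀ a ∈ Finset.range (k+1),
      (((k+1).choose (a+1) : ℕ) : ℝ) * v1^(a+1) * v2^(k+1-(a+1)) * P (a+1) (k+1-(a+1))
      = ((k.choose a : ℕ) : ℝ) * v1^a * v2^(k-a) * (v1 * P (a+1) (k-a))
        + ((k.choose (a+1) : ℕ) : ℝ) * v1^(a+1) * v2^(k-a) * P (a+1) (k-a) := by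
    intro a _
    rw [Nat.succ_sub_succ, Nat.choose_succ_succ]
    push_cast
    ring
  have hB : (∑ a ∈ Finset.range (k+1),
        ((k.choose (a+1) : ℕ) : ℝ) * v1^(a+1) * v2^(k-a) * P (a+1) (k-a))
      = ∑ a ∈ Finset.range k,
        ((k.choose (a+1) : ℕ) : ℝ) * v1^(a+1) * v2^(k-(a+1)) * (v2 * P (a+1) (k-(a+1)+1)) := by
    rw [Finset.sum_range_succ]
    have hlast : ((k.choose (k+1) : ℕ) : ℝ) * v1^(k+1) * v2^(k-k) * P (k+1) (k-k) = 0 := by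
      rw [Nat.choose_succ_self]; simp
    rw [hlast, add_zero]
    apply Finset.sum_congr rfl
    intro a ha
    have halt : a < k := Finset.mem_range.mp ha
    have h1 : k - (a+1) + 1 = k - a := by omega
    have h2 : v2^(k-a) = v2^(k-(a+1)) * v2 := by rw [← pow_succ, ← h1]
    rw [h1, h2]
    ring
  have hg0 : (((k+1).choose 0 : ℕ) : ℝ) * v1^0 * v2^(k+1-0) * P 0 (k+1-0)
      = ((k.choose 0 : ℕ) : ℝ) * v1^0 * v2^(k-0) * (v2 * P 0 (k-0+1)) := by
    simp [pow_succ]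
    ring
  rw [Finset.sum_congr rfl hg, Finset.sum_add_distrib, hB, hg0]
  simp only [mul_add]
  rw [Finset.sum_add_distrib,
    Finset.sum_range_succ' (fun a => ((k.choose a : ℕ) : ℝ) * v1^a * v2^(k-a) * (v2 * P a (k-a+1))) k]
  ring

lemma key (v : ℝ × ℝ) : ∀ (k : ℕ) (ψ : ℝ × ℝ → ℝ), ContDiff ℝ (↑k) ψ →
    ∀ (p : ℝ × ℝ) (t : ℝ),
    iteratedDeriv k (fun s => ψ (p + s • v)) t =
      ∑ a ∈ Finset.range (k+1), ((k.choose a : ℕ) : ℝ) * v.1^a * v.2^(k-a) *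
        Dx^[a] (Dy^[k-a] ψ) (p + t • v) := by
  intro k
  induction k with
  | zero => intro ψ hψ p t; simp [iteratedDeriv_zero]
  | succ k ih =>
      intro ψ hψ p t
      rw [iteratedDeriv_succ']
      have hdiff : Differentiable ℝ ψ := hψ.differentiable (by
        simp)
      set χ : ℝ × ℝ → ℝ := fun q => v.1 * Dx ψ q + v.2 * Dy ψ q with hχdef
      have hder : deriv (fun s : ℝ => ψ (p + s • v)) = fun s : ℝ => χ (p + s • v) := by
        funext s
        exact (line_hasDerivAt p v (hdiff _)).deriv
      have hχ : ContDiff ℝ (↑k) χ :=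
        (contDiff_const.mul (contDiff_Dx hψ)).add (contDiff_const.mul (contDiff_Dy hψ))
      rw [hder, ih χ hχ p t]
      have hterm : ∀ a ∈ Finset.range (k+1),
          ((k.choose a : ℕ) : ℝ) * v.1^a * v.2^(k-a) * Dx^[a] (Dy^[k-a] χ) (p + t • v)
          = ((k.choose a : ℕ) : ℝ) * v.1^a * v.2^(k-a) *
              (v.1 * Dx^[a+1] (Dy^[k-a] ψ) (p + t • v) +
               v.2 * Dx^[a] (Dy^[k-a+1] ψ) (p + t • v)) := by
        intro a ha
        have halt : a ≤ k := Nat.lt_succ_iff.mp (Finset.mem_range.mp ha)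
        have hsm : ContDiff ℝ (↑(a + (k-a) + 1)) ψ := by
          have : a + (k - a) + 1 = k + 1 := by omega
          rw [this]; exact hψ
        rw [combo_iter a (k-a) hsm v]
      rw [Finset.sum_congr rfl hterm, ← binom_step k v.1 v.2
        (fun a b => Dx^[a] (Dy^[b] ψ) (p + t • v))]

lemma pd_eq (a b : ℕ) (φ : ℝ × ℝ → ℝ) (h : ContDiff ℝ (↑(a+b)) φ) (p : ℝ × ℝ) :
    pd a b φ p = Dx^[a] (Dy^[b] φ) p := by
  have hb : ContDiff ℝ (↑b) φ := h.of_le (by exact_mod_cast Nat.le_add_left b a)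
  have hby : ContDiff ℝ (↑a) (Dy^[b] φ) := contDiff_DyIter b h
  have hinner : ∀ s : ℝ, iteratedDeriv b (fun t => φ (s, t)) p.2 = Dy^[b] φ (s, p.2) := by
    intro s
    have e : (fun t : ℝ => φ (s, t))
        = fun t : ℝ => φ (((s, 0) : ℝ × ℝ) + t • (((0 : ℝ), (1 : ℝ)) : ℝ × ℝ)) := by
      funext t; norm_num
    rw [e, key ((0 : ℝ), (1 : ℝ)) b φ hb (s, 0) p.2, Finset.sum_eq_single 0]
    · norm_num
    · intro a' _ ha'
      simp [zero_pow ha']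
    · intro habs
      exact absurd (Finset.mem_range.mpr (Nat.succ_pos b)) habs
  unfold pd
  have e2 : (fun s : ℝ => iteratedDeriv b (fun t => φ (s, t)) p.2)
      = fun s : ℝ => Dy^[b] φ ((((0 : ℝ), p.2) : ℝ × ℝ) + s • (((1 : ℝ), (0 : ℝ)) : ℝ × ℝ)) := by
    funext s; rw [hinner s]; norm_num
  rw [e2, key ((1 : ℝ), (0 : ℝ)) a (Dy^[b] φ) hby (0, p.2) p.1, Finset.sum_eq_single a]
  · norm_num
  · intro a' ha' hne
    have : a - a' ≠ 0 := by
      have := Nat.lt_succ_iff.mp (Finset.mem_range.mp ha')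
      omega
    simp [zero_pow this]
  · intro habs
    exact absurd (Finset.self_mem_range_succ a) habs

lemma idw (g : ℝ → ℝ) (n : ℕ) (hg : ContDiff ℝ (↑n) g) :
    ∀ k, k ≤ n → ∀ t ∈ Set.Icc (0:ℝ) 1,
      iteratedDerivWithin k g (Set.Icc (0:ℝ) 1) t = iteratedDeriv k g t := by
  intro k
  induction k with
  | zero => intro _ t _; simp
  | succ k ih =>
      intro hk t ht
      have hu : UniqueDiffOn ℝ (Set.Icc (0:ℝ) 1) := uniqueDiffOn_Icc one_pos
      rw [iteratedDerivWithin_succ]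
      have heq : Set.EqOn (iteratedDerivWithin k g (Set.Icc (0:ℝ) 1))
          (iteratedDeriv k g) (Set.Icc (0:ℝ) 1) := fun τ hτ => ih (by omega) τ hτ
      rw [derivWithin_congr heq (heq ht)]
      have hdiff : DifferentiableAt ℝ (iteratedDeriv k g) t :=
        (hg.differentiable_iteratedDeriv k (by exact_mod_cast hk)).differentiableAt
      rw [hdiff.derivWithin (hu t ht), ← iteratedDeriv_succ]

lemma taylor_global (m : ℕ) (g : ℝ → ℝ) (hg : ContDiff ℝ (↑(m+1)) g) :
    ∃ c ∈ Set.Ioo (0:ℝ) 1,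
      g 1 - ∑ k ∈ Finset.range (m+1), (1 / (k.factorial : ℝ)) * iteratedDeriv k g 0
        = iteratedDeriv (m+1) g c / ((m+1).factorial : ℝ) := by
  have hf : ContDiffOn ℝ (↑m) g (Set.Icc (0:ℝ) 1) :=
    (hg.of_le (by exact_mod_cast Nat.le_succ m)).contDiffOn
  have hf' : DifferentiableOn ℝ (iteratedDerivWithin m g (Set.Icc (0:ℝ) 1))
      (Set.Ioo (0:ℝ) 1) := by
    have hd : DifferentiableOn ℝ (iteratedDeriv m g) (Set.Ioo (0:ℝ) 1) :=
      ((hg.differentiable_iteratedDeriv m (by exact_mod_cast Nat.lt_succ_self m))).differentiableOn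
    apply hd.congr
    intro τ hτ
    exact idw g (m+1) hg m (Nat.le_succ m) τ (Set.mem_Icc_of_Ioo hτ)
  obtain ⟨c, hc, hT⟩ := taylor_mean_remainder_lagrange (f := g) (x₀ := 0) (x := 1)
    zero_ne_one (by rw [Set.uIcc_of_le zero_le_one]; exact hf)
    (by rw [Set.uIcc_of_le zero_le_one, Set.uIoo_of_le zero_le_one]; exact hf')
  rw [Set.uIoo_of_le zero_le_one] at hc
  rw [Set.uIcc_of_le zero_le_one] at hT
  refine ⟨c, hc, ?_⟩
  have hpoly : taylorWithinEval g m (Set.Icc (0:ℝ) 1) 0 1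
      = ∑ k ∈ Finset.range (m+1), (1 / (k.factorial : ℝ)) * iteratedDeriv k g 0 := by
    rw [taylor_within_apply]
    apply Finset.sum_congr rfl
    intro k hk
    rw [idw g (m+1) hg k (by have := Finset.mem_range.mp hk; omega) 0
      (Set.left_mem_Icc.mpr zero_le_one)]
    simp [smul_eq_mul]
  have hrem : iteratedDerivWithin (m+1) g (Set.Icc (0:ℝ) 1) c = iteratedDeriv (m+1) g c :=
    idw g (m+1) hg (m+1) le_rfl c (Set.mem_Icc_of_Ioo hc)
  rw [← hpoly, hT, hrem]
  norm_num

lemma taylor_bound (n : ℕ) (φ : ℝ × ℝ → ℝ) (hφ : ContDiff ℝ (↑(n+2)) φ) (M : ℝ)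
    (hM : ∀ a b : ℕ, a + b = n + 2 → ∀ p, |pd a b φ p| ≤ M) (p q : ℝ × ℝ) :
    |φ q - ∑ k ∈ Finset.range (n+2), (1/(k.factorial:ℝ)) * ∑ a ∈ Finset.range (k+1),
        ((k.choose a : ℕ):ℝ) * (q.1-p.1)^a * (q.2-p.2)^(k-a) * pd a (k-a) φ p|
      ≤ (2:ℝ)^(n+2) / ((n+2).factorial : ℝ)
          * (Real.sqrt ((q.1-p.1)^2 + (q.2-p.2)^2))^(n+2) * M := by
  have hM0 : 0 ≤ M := le_trans (abs_nonneg _) (hM (n+2) 0 rfl p)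
  set v : ℝ × ℝ := q - p with hv
  have hv1 : v.1 = q.1 - p.1 := rfl
  have hv2 : v.2 = q.2 - p.2 := rfl
  set g : ℝ → ℝ := fun s => φ (p + s • v) with hgdef
  have hline : ContDiff ℝ (↑(n+2)) (fun s : ℝ => p + s • v) :=
    contDiff_const.add (contDiff_id.smul contDiff_const)
  have hg : ContDiff ℝ (↑(n+1+1)) g := by
    have : (n+1+1) = (n+2) := rfl
    rw [this]
    exact hφ.comp hline
  have hg1 : g 1 = φ q := by
    simp only [hgdef, one_smul, hv]
    norm_num
  have hiter : ∀ k : ℕ, k ≤ n + 2 → iteratedDeriv k g 0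
      = ∑ a ∈ Finset.range (k+1), ((k.choose a : ℕ):ℝ) * (q.1-p.1)^a * (q.2-p.2)^(k-a)
          * pd a (k-a) φ p := by
    intro k hk
    have hφk : ContDiff ℝ (↑k) φ := hφ.of_le (by exact_mod_cast hk)
    rw [key v k φ hφk p 0]
    apply Finset.sum_congr rfl
    intro a ha
    have hab : ContDiff ℝ (↑(a + (k - a))) φ := by
      have : a + (k - a) = k := by
        have := Finset.mem_range.mp ha; omega
      rw [this]; exact hφk
    rw [pd_eq a (k-a) φ hab p]
    simp [hv1, hv2]
  obtain ⟨c, hc, hT⟩ := taylor_global (n+1) g hg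
  have hpoly : ∑ k ∈ Finset.range (n+2), (1/(k.factorial:ℝ)) * iteratedDeriv k g 0
      = ∑ k ∈ Finset.range (n+2), (1/(k.factorial:ℝ)) * ∑ a ∈ Finset.range (k+1),
          ((k.choose a : ℕ):ℝ) * (q.1-p.1)^a * (q.2-p.2)^(k-a) * pd a (k-a) φ p := by
    apply Finset.sum_congr rfl
    intro k hk
    rw [hiter k (by have := Finset.mem_range.mp hk; omega)]
  rw [← hpoly, ← hg1]
  have hrem : g 1 - ∑ k ∈ Finset.range (n+2), (1/(k.factorial:ℝ)) * iteratedDeriv k g 0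
      = iteratedDeriv (n+2) g c / ((n+2).factorial : ℝ) := hT
  rw [hrem]
  -- bound the (n+2)-th derivative
  have hc2 : iteratedDeriv (n+2) g c = ∑ a ∈ Finset.range (n+3),
      (((n+2).choose a : ℕ):ℝ) * v.1^a * v.2^(n+2-a) * Dx^[a] (Dy^[n+2-a] φ) (p + c • v) := by
    exact key v (n+2) φ hφ p c
  have hbound : |iteratedDeriv (n+2) g c| ≤ (|v.1| + |v.2|)^(n+2) * M := by
    rw [hc2]
    calc |∑ a ∈ Finset.range (n+3),
        (((n+2).choose a : ℕ):ℝ) * v.1^a * v.2^(n+2-a) * Dx^[a] (Dy^[n+2-a] φ) (p + c • v)|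
        ≤ ∑ a ∈ Finset.range (n+3),
          |(((n+2).choose a : ℕ):ℝ) * v.1^a * v.2^(n+2-a) * Dx^[a] (Dy^[n+2-a] φ) (p + c • v)| :=
          Finset.abs_sum_le_sum_abs _ _
      _ ≤ ∑ a ∈ Finset.range (n+3),
          |v.1|^a * |v.2|^(n+2-a) * (((n+2).choose a : ℕ):ℝ) * M := by
          apply Finset.sum_le_sum
          intro a ha
          have hmem := Finset.mem_range.mp ha
          have hab : a + (n+2-a) = n+2 := by omega
          have hpd : Dx^[a] (Dy^[n+2-a] φ) (p + c • v) = pd a (n+2-a) φ (p + c • v) := by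
            rw [pd_eq a (n+2-a) φ (by rw [hab]; exact hφ) (p + c • v)]
          rw [abs_mul, abs_mul, abs_mul, abs_pow, abs_pow, Nat.abs_cast, hpd]
          calc (((n+2).choose a : ℕ):ℝ) * |v.1|^a * |v.2|^(n+2-a) * |pd a (n+2-a) φ (p + c • v)|
              ≤ (((n+2).choose a : ℕ):ℝ) * |v.1|^a * |v.2|^(n+2-a) * M := by
                apply mul_le_mul_of_nonneg_left (hM a (n+2-a) hab _)
                positivity
            _ = |v.1|^a * |v.2|^(n+2-a) * (((n+2).choose a : ℕ):ℝ) * M := by ring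
      _ = (|v.1| + |v.2|)^(n+2) * M := by
          rw [← Finset.sum_mul, ← add_pow]
  have hsq : |v.1| ≤ Real.sqrt ((q.1-p.1)^2 + (q.2-p.2)^2) := by
    rw [hv1, ← Real.sqrt_sq_eq_abs]
    exact Real.sqrt_le_sqrt (by nlinarith [sq_nonneg (q.2-p.2)])
  have hsq2 : |v.2| ≤ Real.sqrt ((q.1-p.1)^2 + (q.2-p.2)^2) := by
    rw [hv2, ← Real.sqrt_sq_eq_abs]
    exact Real.sqrt_le_sqrt (by nlinarith [sq_nonneg (q.1-p.1)])
  set ρ := Real.sqrt ((q.1-p.1)^2 + (q.2-p.2)^2) with hρ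
  have hρ0 : 0 ≤ ρ := Real.sqrt_nonneg _
  have hpow : (|v.1| + |v.2|)^(n+2) ≤ (2*ρ)^(n+2) := by
    apply pow_le_pow_left₀ (by positivity)
    linarith
  have hfact : (0:ℝ) < ((n+2).factorial : ℝ) := by positivity
  rw [abs_div, Nat.abs_cast]
  rw [div_le_iff₀ hfact]
  calc |iteratedDeriv (n+2) g c| ≤ (|v.1| + |v.2|)^(n+2) * M := hbound
    _ ≤ (2*ρ)^(n+2) * M := by
        apply mul_le_mul_of_nonneg_right hpow hM0
    _ = (2:ℝ)^(n+2) * ρ^(n+2) * M := by rw [mul_pow]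
    _ ≤ (2:ℝ)^(n+2) / ((n+2).factorial : ℝ) * ρ^(n+2) * M * ((n+2).factorial : ℝ) := by
        rw [div_mul_eq_mul_div, div_mul_eq_mul_div, div_mul_eq_mul_div, le_div_iff₀ hfact]

lemma calpha (m : ℕ) :
    ∑ a ∈ Finset.range (m+1), 1 / ((a.factorial : ℝ) * ((m - a).factorial : ℝ))
      = (2:ℝ)^m / (m.factorial : ℝ) := by
  have h : ∀ a ∈ Finset.range (m+1),
      1 / ((a.factorial : ℝ) * ((m - a).factorial : ℝ)) = (m.choose a : ℝ) / (m.factorial : ℝ) := by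
    intro a ha
    have hle : a ≤ m := Nat.lt_succ_iff.mp (Finset.mem_range.mp ha)
    rw [Nat.cast_choose ℝ hle]
    have h1 : (m.factorial : ℝ) ≠ 0 := by positivity
    field_simp
  rw [Finset.sum_congr rfl h, ← Finset.sum_div]
  congr 1
  rw [← Nat.cast_sum, Nat.sum_range_choose]
  push_cast
  ring

/-- Consistency of the discrete Laplacian `Δ_h ω` of a particle
field `ω = ∑ Γ_i δ_{x_i}`: tested against any `C^{n+2}` function `φ` with
bounded derivatives of order `n+2`, the error is `O((Rh)^{n+2}/(rh)²)·∑|Γ_i|`.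
Here `⟨Δω, φ⟩ = ∑_i Γ_i Δφ(x_i)` and `⟨Δ_h ω, φ⟩ = ∑_i ∑_j Γ_i f_ij φ(x_j)`. -/
theorem stmt_11 {N : ℕ} (n : ℕ) (hn : n = 1 ∨ n = 2)
    (x : Fin N → ℝ × ℝ) (f : Fin N → Fin N → ℝ) (Γ : Fin N → ℝ)
    (r R h : ℝ) (hr : 0 < r) (hR : 0 < R) (hh : 0 < h)
    (φ : ℝ × ℝ → ℝ) (hφ : ContDiff ℝ (n + 2 : ℕ) φ)
    (M : ℝ) (hM : ∀ a b : ℕ, a + b = n + 2 → ∀ p, |pd a b φ p| ≤ M)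
    (hmom : ∀ i, ∀ a b : ℕ, a + b ≤ n + 1 → a + b ≠ 2 →
      ∑ j, f i j * ((x j).1 - (x i).1)^a * ((x j).2 - (x i).2)^b = 0)
    (hxx : ∀ i, ∑ j, f i j * ((x j).1 - (x i).1)^2 = 2)
    (hyy : ∀ i, ∑ j, f i j * ((x j).2 - (x i).2)^2 = 2)
    (hxy : ∀ i, ∑ j, f i j * (((x j).1 - (x i).1) * ((x j).2 - (x i).2)) = 0)
    (hnonneg : ∀ i j, j ≠ i → 0 ≤ f i j)
    (hsupp : ∀ i j, j ≠ i → f i j ≠ 0 →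
      r * h ≤ Real.sqrt (((x j).1 - (x i).1)^2 + ((x j).2 - (x i).2)^2) ∧
      Real.sqrt (((x j).1 - (x i).1)^2 + ((x j).2 - (x i).2)^2) ≤ R * h) :
    |∑ i, Γ i * (pd 2 0 φ (x i) + pd 0 2 φ (x i)) -
        ∑ i, ∑ j, Γ i * f i j * φ (x j)| ≤
      4 * (∑ a ∈ Finset.range (n + 3),
            1 / ((a.factorial : ℝ) * ((n + 2 - a).factorial))) *
        ((R * h)^(n + 2) / (r * h)^2) * (∑ i, |Γ i|) * M := by
  have hn1 : 1 ≤ n := by rcases hn with h'|h' <;> omega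
  have hM0 : 0 ≤ M := le_trans (abs_nonneg _) (hM (n+2) 0 rfl (0,0))
  have hrh : (0:ℝ) < r * h := mul_pos hr hh
  have hRh : (0:ℝ) < R * h := mul_pos hR hh
  set K : ℝ := (2:ℝ)^(n+2) / ((n+2).factorial : ℝ) * (R*h)^(n+2) * M with hK
  have hK0 : 0 ≤ K := by positivity
  have hper : ∀ i, |pd 2 0 φ (x i) + pd 0 2 φ (x i) - ∑ j, f i j * φ (x j)|
      ≤ 4 / (r*h)^2 * K := by
    intro i
    set P : Fin N → ℝ := fun j => ∑ k ∈ Finset.range (n+2), (1/(k.factorial:ℝ)) *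
      ∑ a ∈ Finset.range (k+1), ((k.choose a : ℕ):ℝ) * ((x j).1-(x i).1)^a *
        ((x j).2-(x i).2)^(k-a) * pd a (k-a) φ (x i) with hP
    have hA : ∑ j, f i j * P j = pd 2 0 φ (x i) + pd 0 2 φ (x i) := by
      have step1 : ∀ j, f i j * P j = ∑ k ∈ Finset.range (n+2), ∑ a ∈ Finset.range (k+1),
          (1/(k.factorial:ℝ)) * ((k.choose a : ℕ):ℝ) * pd a (k-a) φ (x i) *
          (f i j * ((x j).1-(x i).1)^a * ((x j).2-(x i).2)^(k-a)) := by
        intro j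
        rw [hP, Finset.mul_sum]
        apply Finset.sum_congr rfl; intro k _
        rw [Finset.mul_sum, Finset.mul_sum]
        apply Finset.sum_congr rfl; intro a _
        ring
      have step2 : ∑ j, f i j * P j
          = ∑ k ∈ Finset.range (n+2), ∑ a ∈ Finset.range (k+1),
            (1/(k.factorial:ℝ)) * ((k.choose a:ℕ):ℝ) * pd a (k-a) φ (x i) *
            (∑ j, f i j * ((x j).1-(x i).1)^a * ((x j).2-(x i).2)^(k-a)) := by
        rw [Finset.sum_congr rfl (fun j _ => step1 j), Finset.sum_comm]
        apply Finset.sum_congr rfl; intro k _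
        rw [Finset.sum_comm]
        apply Finset.sum_congr rfl; intro a _
        rw [Finset.mul_sum]
      rw [step2, Finset.sum_eq_single 2]
      · have m20 : ∑ j, f i j * ((x j).1-(x i).1)^2 * ((x j).2-(x i).2)^(2-2) = 2 := by
          simpa using hxx i
        have m11 : ∑ j, f i j * ((x j).1-(x i).1)^1 * ((x j).2-(x i).2)^(2-1) = 0 := by
          simpa [mul_assoc] using hxy i
        have m02 : ∑ j, f i j * ((x j).1-(x i).1)^0 * ((x j).2-(x i).2)^(2-0) = 2 := by
          simpa using hyy i
        rw [Finset.sum_range_succ, Finset.sum_range_succ, Finset.sum_range_succ,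
          Finset.sum_range_zero, m20, m11, m02]
        norm_num [Nat.factorial]
        ring
      · intro k hk hk2
        apply Finset.sum_eq_zero
        intro a ha
        have hk' : k ≤ n+1 := by have := Finset.mem_range.mp hk; omega
        have ha' : a ≤ k := Nat.lt_succ_iff.mp (Finset.mem_range.mp ha)
        have hmom' := hmom i a (k-a) (by omega) (by omega)
        rw [hmom', mul_zero]
      · intro h2
        exact absurd (Finset.mem_range.mpr (by omega)) h2
    have hEi : pd 2 0 φ (x i) + pd 0 2 φ (x i) - ∑ j, f i j * φ (x j)
        = ∑ j, f i j * (P j - φ (x j)) := by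
      rw [← hA, ← Finset.sum_sub_distrib]
      apply Finset.sum_congr rfl; intro j _; ring
    rw [hEi]
    have hRem : ∀ j, |P j - φ (x j)| ≤ (2:ℝ)^(n+2)/((n+2).factorial:ℝ) *
        (Real.sqrt (((x j).1-(x i).1)^2 + ((x j).2-(x i).2)^2))^(n+2) * M := by
      intro j
      rw [abs_sub_comm]
      exact taylor_bound n φ hφ M hM (x i) (x j)
    have hRemI : P i - φ (x i) = 0 := by
      have hρi : Real.sqrt (((x i).1-(x i).1)^2 + ((x i).2-(x i).2)^2) = 0 := by
        simp
      have h' := hRem i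
      rw [hρi, zero_pow (by omega : n+2 ≠ 0), mul_zero, zero_mul] at h'
      exact abs_eq_zero.mp (le_antisymm h' (abs_nonneg _))
    have hsum_f : (∑ j ∈ Finset.univ.erase i, f i j) * (r*h)^2 ≤ 4 := by
      have hmono : ∀ j ∈ Finset.univ.erase i, f i j * (r*h)^2
          ≤ f i j * (((x j).1-(x i).1)^2 + ((x j).2-(x i).2)^2) := by
        intro j hj
        have hji : j ≠ i := (Finset.mem_erase.mp hj).1
        rcases eq_or_ne (f i j) 0 with h0 | h0
        · simp [h0]
        · have hρj := (hsupp i j hji h0).1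
          have hs0 : (0:ℝ) ≤ ((x j).1-(x i).1)^2 + ((x j).2-(x i).2)^2 := by positivity
          have hss := Real.sq_sqrt hs0
          have hand : (r*h)^2 ≤ ((x j).1-(x i).1)^2 + ((x j).2-(x i).2)^2 := by
            nlinarith [Real.sqrt_nonneg (((x j).1-(x i).1)^2 + ((x j).2-(x i).2)^2), hrh.le]
          exact mul_le_mul_of_nonneg_left hand (hnonneg i j hji)
      calc (∑ j ∈ Finset.univ.erase i, f i j) * (r*h)^2
          = ∑ j ∈ Finset.univ.erase i, f i j * (r*h)^2 := by rw [Finset.sum_mul]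
        _ ≤ ∑ j ∈ Finset.univ.erase i, f i j * (((x j).1-(x i).1)^2 + ((x j).2-(x i).2)^2) :=
            Finset.sum_le_sum hmono
        _ = ∑ j, f i j * (((x j).1-(x i).1)^2 + ((x j).2-(x i).2)^2) := by
            rw [Finset.sum_erase_eq_sub (Finset.mem_univ i)]
            simp
        _ = 4 := by
            simp only [mul_add, Finset.sum_add_distrib]
            rw [hxx i, hyy i]
            norm_num
    have hfsum : ∑ j ∈ Finset.univ.erase i, f i j ≤ 4 / (r*h)^2 := by
      rw [le_div_iff₀ (by positivity)]
      exact hsum_f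
    have hterm : ∀ j ∈ Finset.univ.erase i, |f i j * (P j - φ (x j))| ≤ f i j * K := by
      intro j hj
      have hji := (Finset.mem_erase.mp hj).1
      rcases eq_or_ne (f i j) 0 with h0 | h0
      · simp [h0]
      · have hρle := (hsupp i j hji h0).2
        have hρn : (Real.sqrt (((x j).1-(x i).1)^2 + ((x j).2-(x i).2)^2))^(n+2)
            ≤ (R*h)^(n+2) := pow_le_pow_left₀ (Real.sqrt_nonneg _) hρle _
        have hlek : |P j - φ (x j)| ≤ K := by
          refine le_trans (hRem j) ?_
          rw [hK]
          have h2 : (0:ℝ) ≤ (2:ℝ)^(n+2)/((n+2).factorial:ℝ) := by positivity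
          exact mul_le_mul_of_nonneg_right (mul_le_mul_of_nonneg_left hρn h2) hM0
        rw [abs_mul, abs_of_nonneg (hnonneg i j hji)]
        exact mul_le_mul_of_nonneg_left hlek (hnonneg i j hji)
    calc |∑ j, f i j * (P j - φ (x j))| ≤ ∑ j, |f i j * (P j - φ (x j))| :=
          Finset.abs_sum_le_sum_abs _ _
      _ = ∑ j ∈ Finset.univ.erase i, |f i j * (P j - φ (x j))| := by
          rw [Finset.sum_erase_eq_sub (Finset.mem_univ i), hRemI]
          simp
      _ ≤ ∑ j ∈ Finset.univ.erase i, f i j * K := Finset.sum_le_sum hterm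
      _ = (∑ j ∈ Finset.univ.erase i, f i j) * K := by rw [Finset.sum_mul]
      _ ≤ 4/(r*h)^2 * K := mul_le_mul_of_nonneg_right hfsum hK0
  have hLHS : ∑ i, Γ i * (pd 2 0 φ (x i) + pd 0 2 φ (x i)) - ∑ i, ∑ j, Γ i * f i j * φ (x j)
      = ∑ i, Γ i * (pd 2 0 φ (x i) + pd 0 2 φ (x i) - ∑ j, f i j * φ (x j)) := by
    rw [← Finset.sum_sub_distrib]
    apply Finset.sum_congr rfl; intro i _
    rw [mul_sub, Finset.mul_sum]
    congr 1
    apply Finset.sum_congr rfl; intro j _; ring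
  rw [hLHS]
  have hcal : ∑ a ∈ Finset.range (n+3), 1/((a.factorial:ℝ) * ((n+2-a).factorial))
      = (2:ℝ)^(n+2)/((n+2).factorial:ℝ) := calpha (n+2)
  calc |∑ i, Γ i * (pd 2 0 φ (x i) + pd 0 2 φ (x i) - ∑ j, f i j * φ (x j))|
      ≤ ∑ i, |Γ i * (pd 2 0 φ (x i) + pd 0 2 φ (x i) - ∑ j, f i j * φ (x j))| :=
        Finset.abs_sum_le_sum_abs _ _
    _ ≤ ∑ i, |Γ i| * (4/(r*h)^2 * K) := by
        apply Finset.sum_le_sum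
        intro i _
        rw [abs_mul]
        exact mul_le_mul_of_nonneg_left (hper i) (abs_nonneg _)
    _ = (∑ i, |Γ i|) * (4/(r*h)^2 * K) := by rw [← Finset.sum_mul]
    _ = 4 * (∑ a ∈ Finset.range (n + 3),
            1 / ((a.factorial : ℝ) * ((n + 2 - a).factorial))) *
          ((R * h)^(n + 2) / (r * h)^2) * (∑ i, |Γ i|) * M := by
        rw [hcal, hK]
        ring
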